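/- For a positive semidefinite L with eigenvalues λ_1,...,λ_N, the expected cardinality of a random subset Y drawn from the L-ensemble P(Y) = det(L_Y)/det(L+I) equals Σ_n λ_n/(λ_n+1) = tr(K), where K = L(L+I)^{-1}. -/

import Mathlib

open Matrix BigOperators Polynomial

/-- The principal minor of `L` indexed by the subset `A`. -/
noncomputable def principalMinor {N : ℕ} (L : Matrix (Fin N) (Fin N) ℝ)
    (A : Finset (Fin N)) : ℝ :=
  (L.submatrix (fun i : A => (i : Fin N)) (fun j : A => (j : Fin N))).det

lemma det_piecewise_one {N : ℕ} (M : Matrix (Fin N) (Fin N) ℝ) (S : Finset (Fin N)) :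
    (Matrix.of (S.piecewise M (1 : Matrix (Fin N) (Fin N) ℝ)) : Matrix (Fin N) (Fin N) ℝ).det
      = principalMinor M S := by
  classical
  rw [← Matrix.det_submatrix_equiv_self (Equiv.sumCompl (· ∈ S))]
  have : (Matrix.of (S.piecewise M (1 : Matrix (Fin N) (Fin N) ℝ))).submatrix
      (Equiv.sumCompl (· ∈ S)) (Equiv.sumCompl (· ∈ S)) =
      Matrix.fromBlocks
        (M.submatrix (fun i : S => (i : Fin N)) (fun j : S => (j : Fin N)))
        (M.submatrix (fun i : S => (i : Fin N)) (fun j : {x : Fin N // ¬ x ∈ S} => (j : Fin N)))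
        0 1 := by
    ext i j
    cases i with
    | inl i =>
      cases j with
      | inl j =>
        simp [Finset.piecewise_eq_of_mem _ _ _ i.2]
        exact congrFun (Finset.piecewise_eq_of_mem _ _ _ i.2) _
      | inr j =>
        simp [Finset.piecewise_eq_of_mem _ _ _ i.2]
        exact congrFun (Finset.piecewise_eq_of_mem _ _ _ i.2) _
    | inr i =>
      cases j with
      | inl j =>
        have : (i : Fin N) ≠ (j : Fin N) := fun h => i.2 (h ▸ j.2)
        simp [Finset.piecewise_eq_of_notMem _ _ _ i.2, Matrix.one_apply, this]
        unfold Finset.piecewise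
        simp [i.2, Matrix.one_apply, this]
      | inr j =>
        simp [Finset.piecewise_eq_of_notMem _ _ _ i.2, Matrix.one_apply, Subtype.ext_iff]
        unfold Finset.piecewise
        simp [i.2, Matrix.one_apply, Subtype.ext_iff]
  rw [this, Matrix.det_fromBlocks_zero₂₁, Matrix.det_one, mul_one]
  rfl

lemma det_add_diagonal {N : ℕ} (M : Matrix (Fin N) (Fin N) ℝ) (d : Fin N → ℝ) :
    (M + Matrix.diagonal d).det =
      ∑ S : Finset (Fin N), (∏ i ∈ Sᶜ, d i) * principalMinor M S := by
  classical
  have h := (Matrix.detRowAlternating (R := ℝ) (n := Fin N)).toMultilinearMap.map_add_univ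
    M (Matrix.diagonal d)
  have hdet : (M + Matrix.diagonal d).det =
      ∑ S : Finset (Fin N),
        (Matrix.detRowAlternating (R := ℝ) (n := Fin N))
          (S.piecewise M (Matrix.diagonal d)) := h
  rw [hdet]
  refine Finset.sum_congr rfl fun S _ => ?_
  have key : (S.piecewise M (Matrix.diagonal d) : Matrix (Fin N) (Fin N) ℝ) =
      Matrix.diagonal (fun i => if i ∈ S then 1 else d i) *
        Matrix.of (S.piecewise M (1 : Matrix (Fin N) (Fin N) ℝ)) := by
    ext i j
    by_cases hi : i ∈ S
    · simp [Matrix.diagonal_mul, Finset.piecewise_eq_of_mem _ _ _ hi, hi]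
      unfold Finset.piecewise
      simp [hi]
    · simp [Matrix.diagonal_mul, Finset.piecewise_eq_of_notMem _ _ _ hi, hi,
        Matrix.diagonal_apply, Matrix.one_apply, mul_ite]
      unfold Finset.piecewise
      simp [hi, Matrix.diagonal_apply, Matrix.one_apply, mul_ite]
  have : (Matrix.detRowAlternating (R := ℝ) (n := Fin N))
      (S.piecewise M (Matrix.diagonal d)) =
      (Matrix.of (S.piecewise M (Matrix.diagonal d)) : Matrix (Fin N) (Fin N) ℝ).det := rfl
  have key' : (Matrix.of (S.piecewise M (Matrix.diagonal d)) : Matrix (Fin N) (Fin N) ℝ) =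
      Matrix.diagonal (fun i => if i ∈ S then 1 else d i) *
        Matrix.of (S.piecewise M (1 : Matrix (Fin N) (Fin N) ℝ)) := key
  rw [this, key', Matrix.det_mul, Matrix.det_diagonal, det_piecewise_one]
  congr 1
  rw [← Finset.prod_compl_mul_prod S (f := fun i => if i ∈ S then (1:ℝ) else d i)]
  have h1 : ∏ i ∈ Sᶜ, (if i ∈ S then (1:ℝ) else d i) = ∏ i ∈ Sᶜ, d i :=
    Finset.prod_congr rfl fun i hi => by simp [Finset.mem_compl.mp hi]
  have h2 : ∏ i ∈ S, (if i ∈ S then (1:ℝ) else d i) = 1 :=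
    Finset.prod_eq_one fun i hi => by simp [hi]
  rw [h1, h2, mul_one]

lemma eval_derivative_prod' {ι : Type*} [DecidableEq ι] (s : Finset ι) (f : ι → Polynomial ℝ)
    (x : ℝ) :
    (Polynomial.derivative (∏ i ∈ s, f i)).eval x =
      ∑ i ∈ s, (Polynomial.derivative (f i)).eval x * ∏ j ∈ s.erase i, (f j).eval x := by
  induction s using Finset.induction with
  | empty => simp
  | @insert a s ha ih =>
    rw [Finset.prod_insert ha, derivative_mul, eval_add, eval_mul, eval_mul, ih,
      Finset.sum_insert ha, Finset.erase_insert ha]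
    rw [Finset.mul_sum, eval_prod]
    have : ∀ i ∈ s, (f a).eval x * ((derivative (f i)).eval x * ∏ j ∈ s.erase i, (f j).eval x)
        = (derivative (f i)).eval x * ∏ j ∈ (insert a s).erase i, (f j).eval x := by
      intro i hi
      rw [Finset.erase_insert_of_ne (by rintro rfl; exact ha hi), Finset.prod_insert
        (fun h => ha (Finset.mem_of_mem_erase h))]
      ring
    rw [Finset.sum_congr rfl this]

set_option maxRecDepth 4000 in
theorem stmt_8 {N : ℕ} (L : Matrix (Fin N) (Fin N) ℝ) (hL : L.PosSemidef)
    (lam : Fin N → ℝ) (v : Fin N → Fin N → ℝ)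
    (horth : ∀ m n, v m ⬝ᵥ v n = if m = n then (1 : ℝ) else 0)
    (hlam : ∀ n, 0 ≤ lam n)
    (hLdecomp : L = ∑ n, lam n • vecMulVec (v n) (v n)) :
    (∑ Y : Finset (Fin N), (Y.card : ℝ) * (principalMinor L Y / (L + 1).det)) =
      (∑ n, lam n / (lam n + 1)) ∧
    (∑ n, lam n / (lam n + 1)) = (L * (L + 1)⁻¹).trace := by
  classical
  set V : Matrix (Fin N) (Fin N) ℝ := Matrix.of v with hV
  have hVVt : V * Vᵀ = 1 := by
    ext m n
    simpa [Matrix.mul_apply, Matrix.one_apply, dotProduct, hV] using horth m n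
  have hVtV : Vᵀ * V = 1 := mul_eq_one_comm.mp hVVt
  have hdetV : V.det * Vᵀ.det = 1 := by
    rw [← Matrix.det_mul, hVVt, Matrix.det_one]
  -- representation of ∑ d n • vecMulVec
  have hrep : ∀ d : Fin N → ℝ,
      Vᵀ * Matrix.diagonal d * V = ∑ n, d n • vecMulVec (v n) (v n) := by
    intro d
    ext i j
    simp only [Matrix.mul_apply, Matrix.diagonal_apply, Matrix.transpose_apply,
      Finset.sum_apply, Matrix.sum_apply, Matrix.smul_apply, Matrix.vecMulVec_apply,
      smul_eq_mul, hV, Matrix.of_apply]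
    refine Finset.sum_congr rfl fun n _ => ?_
    simp only [mul_ite, mul_zero, Finset.sum_ite_eq' Finset.univ n (fun m => v m i * d m),
      Finset.mem_univ, if_true]
    ring
  have hLrep : L = Vᵀ * Matrix.diagonal lam * V := by rw [hrep, ← hLdecomp]
  -- determinant of conjugated diagonal
  have hdetconj : ∀ d : Fin N → ℝ, (Vᵀ * Matrix.diagonal d * V).det = ∏ n, d n := by
    intro d
    rw [Matrix.det_mul, Matrix.det_mul, Matrix.det_diagonal]
    calc Vᵀ.det * (∏ n, d n) * V.det = (∏ n, d n) * (V.det * Vᵀ.det) := by ring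
    _ = ∏ n, d n := by rw [hdetV, mul_one]
  have hone : (1 : Matrix (Fin N) (Fin N) ℝ) = Vᵀ * Matrix.diagonal (fun _ => (1:ℝ)) * V := by
    rw [Matrix.diagonal_one, Matrix.mul_one, hVtV]
  -- conjugation form of x • L + 1
  have hconj : ∀ x : ℝ, x • L + 1 = Vᵀ * Matrix.diagonal (fun n => x * lam n + 1) * V := by
    intro x
    have hd : x • Matrix.diagonal lam + Matrix.diagonal (fun _ => (1:ℝ)) =
        Matrix.diagonal (fun n => x * lam n + 1) := by
      ext i j
      by_cases h : i = j <;> simp [Matrix.diagonal_apply, h]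
    have : x • L + 1 = Vᵀ * Matrix.diagonal (fun n => x * lam n + 1) * V := by
      calc x • L + 1
          = x • (Vᵀ * Matrix.diagonal lam * V) + Vᵀ * Matrix.diagonal (fun _ => (1:ℝ)) * V := by
            rw [← hLrep, ← hone]
        _ = Vᵀ * (x • Matrix.diagonal lam + Matrix.diagonal (fun _ => (1:ℝ))) * V := by
            rw [Matrix.mul_add, Matrix.add_mul, Matrix.mul_smul, Matrix.smul_mul]
        _ = Vᵀ * Matrix.diagonal (fun n => x * lam n + 1) * V := by rw [hd]
    exact this
  have hdetx : ∀ x : ℝ, (x • L + 1).det = ∏ n, (x * lam n + 1) := fun x => by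
    rw [hconj x, hdetconj]
  have hLp1 : L + 1 = Vᵀ * Matrix.diagonal (fun n => lam n + 1) * V := by
    have h := hconj 1
    simp only [one_smul, one_mul] at h
    exact h
  have hP : (L + 1).det = ∏ n, (lam n + 1) := by
    have h := hdetx 1
    simp only [one_smul, one_mul] at h
    exact h
  have hpos : ∀ n, (0:ℝ) < lam n + 1 := fun n => by linarith [hlam n]
  have hPpos : (0:ℝ) < ∏ n, (lam n + 1) := Finset.prod_pos fun n _ => hpos n
  -- the polynomial identity
  set p : Polynomial ℝ := ∏ n, (Polynomial.C (lam n) * Polynomial.X + 1) with hp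
  set q : Polynomial ℝ :=
    ∑ Y : Finset (Fin N), Polynomial.C (principalMinor L Y) * Polynomial.X ^ Y.card with hq
  have hminor_smul : ∀ (x : ℝ) (S : Finset (Fin N)),
      principalMinor (x • L) S = x ^ S.card * principalMinor L S := by
    intro x S
    unfold principalMinor
    rw [show (x • L).submatrix (fun i : S => (i : Fin N)) (fun j : S => (j : Fin N))
        = x • (L.submatrix (fun i : S => (i : Fin N)) (fun j : S => (j : Fin N))) from rfl,
      Matrix.det_smul, Fintype.card_coe]
  have hpq : p = q := by
    apply Polynomial.funext
    intro x
    have h1 : p.eval x = ∏ n, (x * lam n + 1) := by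
      rw [hp, Polynomial.eval_prod]
      refine Finset.prod_congr rfl fun n _ => ?_
      rw [Polynomial.eval_add, Polynomial.eval_mul, Polynomial.eval_C, Polynomial.eval_X,
        Polynomial.eval_one]
      ring
    have h2 : q.eval x = ∑ S : Finset (Fin N), x ^ S.card * principalMinor L S := by
      rw [hq, Polynomial.eval_finset_sum]
      refine Finset.sum_congr rfl fun S _ => ?_
      rw [Polynomial.eval_mul, Polynomial.eval_C, Polynomial.eval_pow, Polynomial.eval_X]
      ring
    rw [h1, h2, ← hdetx x]
    have : x • L + 1 = x • L + Matrix.diagonal (fun _ => (1:ℝ)) := by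
      rw [Matrix.diagonal_one]
    rw [this, det_add_diagonal]
    refine Finset.sum_congr rfl fun S _ => ?_
    rw [hminor_smul, Finset.prod_const_one, one_mul]
  -- the derivative identity
  have hkey : (∑ Y : Finset (Fin N), (Y.card : ℝ) * principalMinor L Y) =
      ∑ m, lam m * ∏ n ∈ Finset.univ.erase m, (lam n + 1) := by
    have hder_q : (Polynomial.derivative q).eval 1 =
        ∑ Y : Finset (Fin N), (Y.card : ℝ) * principalMinor L Y := by
      rw [hq, map_sum, Polynomial.eval_finset_sum]
      refine Finset.sum_congr rfl fun Y _ => ?_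
      rw [Polynomial.derivative_C_mul, Polynomial.derivative_X_pow, Polynomial.eval_mul,
        Polynomial.eval_C, Polynomial.eval_mul, Polynomial.eval_C, Polynomial.eval_pow,
        Polynomial.eval_X, one_pow, mul_one]
      ring
    have hder_p : (Polynomial.derivative p).eval 1 =
        ∑ m, lam m * ∏ n ∈ Finset.univ.erase m, (lam n + 1) := by
      rw [hp, eval_derivative_prod']
      refine Finset.sum_congr rfl fun m _ => ?_
      congr 1
      · rw [Polynomial.derivative_add, Polynomial.derivative_one, add_zero,
          Polynomial.derivative_C_mul, Polynomial.derivative_X, mul_one, Polynomial.eval_C]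
      · refine Finset.prod_congr rfl fun n _ => ?_
        rw [Polynomial.eval_add, Polynomial.eval_mul, Polynomial.eval_C, Polynomial.eval_X,
          Polynomial.eval_one, mul_one]
    rw [← hder_q, ← hder_p, hpq]
  have hsplit : ∀ m : Fin N,
      (∏ n, (lam n + 1)) = (lam m + 1) * ∏ n ∈ Finset.univ.erase m, (lam n + 1) :=
    fun m => (Finset.mul_prod_erase _ _ (Finset.mem_univ m)).symm
  constructor
  · have : (∑ Y : Finset (Fin N), (Y.card : ℝ) * (principalMinor L Y / (L + 1).det)) =
        (∑ Y : Finset (Fin N), (Y.card : ℝ) * principalMinor L Y) / (L + 1).det := by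
      rw [Finset.sum_div]
      exact Finset.sum_congr rfl fun Y _ => by ring
    rw [this, hkey, hP, Finset.sum_div]
    refine Finset.sum_congr rfl fun m _ => ?_
    have herase : (0:ℝ) < ∏ n ∈ Finset.univ.erase m, (lam n + 1) :=
      Finset.prod_pos fun n _ => hpos n
    rw [hsplit m, mul_comm (lam m + 1), mul_comm (lam m)]
    rw [mul_div_mul_left _ _ (ne_of_gt herase)]
  · -- trace part
    have hconjmul : ∀ d e : Fin N → ℝ,
        (Vᵀ * Matrix.diagonal d * V) * (Vᵀ * Matrix.diagonal e * V) =
          Vᵀ * Matrix.diagonal (fun n => d n * e n) * V := by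
      intro d e
      calc (Vᵀ * Matrix.diagonal d * V) * (Vᵀ * Matrix.diagonal e * V)
          = Vᵀ * Matrix.diagonal d * (V * Vᵀ) * Matrix.diagonal e * V := by
            simp only [Matrix.mul_assoc]
        _ = Vᵀ * (Matrix.diagonal d * Matrix.diagonal e) * V := by
            rw [hVVt, Matrix.mul_one, Matrix.mul_assoc _ (Matrix.diagonal d)]
        _ = Vᵀ * Matrix.diagonal (fun n => d n * e n) * V := by
            rw [Matrix.diagonal_mul_diagonal]
    have hKinv : (L + 1)⁻¹ = Vᵀ * Matrix.diagonal (fun n => (lam n + 1)⁻¹) * V := by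
      apply Matrix.inv_eq_right_inv
      rw [hLp1, hconjmul]
      have : (fun n => (lam n + 1) * (lam n + 1)⁻¹) = fun _ : Fin N => (1:ℝ) := by
        funext n
        exact mul_inv_cancel₀ (ne_of_gt (hpos n))
      rw [this, Matrix.diagonal_one, Matrix.mul_one, hVtV]
    have hLK : L * (L + 1)⁻¹ = Vᵀ * Matrix.diagonal (fun n => lam n * (lam n + 1)⁻¹) * V := by
      rw [hKinv, hLrep, hconjmul]
    rw [hLK]
    have : (Vᵀ * Matrix.diagonal (fun n => lam n * (lam n + 1)⁻¹) * V).trace =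
        (Matrix.diagonal (fun n => lam n * (lam n + 1)⁻¹)).trace := by
      rw [Matrix.trace_mul_comm, ← Matrix.mul_assoc, hVVt, Matrix.one_mul]
    rw [this, Matrix.trace_diagonal]
    exact Finset.sum_congr rfl fun n _ => (div_eq_mul_inv _ _)
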